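/- Let d = 1, T = 2, R(z) = |z| (so ∂R(0) = [−1,1]), E(z) = (1/2)z² − z, z₀ = 0, and ℓ ≡ 0 on [0,2]. Define S = 5/2 and, for s ∈ [0,5/2]: ẑ(s) = 0 on [0,1], ẑ(s) = s − 1 on (1, 3/2), ẑ(s) = 1/2 on [3/2, 5/2]; t̂(s) = s on [0,1], t̂(s) = 1 on (1, 3/2), t̂(s) = s − 1/2 on [3/2, 5/2]; ℓ̂(s) = 0 on [0,1], ℓ̂(s) = s − 1 on (1, 3/2), ℓ̂(s) = 0 on [3/2, 5/2]. Then (S, t̂, ẑ, ℓ̂) satisfies conditions (2.1)–(2.4) with D_zÎ(s,z) = z − 1 − ℓ̂(s) and ℓ̂(s) = ℓ(t̂(s)) = 0 for all s in the set M = (0,1) ∪ (3/2, 5/2) where t̂ is strictly increasing; hence it is a relaxed solution associated with the zero load ℓ ≡ 0, although ẑ is not constantly equal to the (locally stable) initial state z₀ = 0. (Section 4.2) -/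

import Mathlib

open MeasureTheory Set Filter
open scoped Topology NNReal

noncomputable section

/-- `dist(η, [-1,1]) = max(|η| - 1, 0)`, the distance to `∂R(0)` for `R = |·|`. -/
def dist1 (η : ℝ) : ℝ := max (|η| - 1) 0

/-- The energy `E(z) = z²/2 - z` of the one-dimensional example. -/
def En1 (z : ℝ) : ℝ := (1 / 2) * z ^ 2 - z

/-- The set `M` where `t̂` is strictly increasing. -/
def Mset (S : ℝ) (that : ℝ → ℝ) : Set ℝ :=
  {s | s ∈ Ioo 0 S ∧ ∀ s₁ ∈ Icc 0 S, ∀ s₂ ∈ Icc 0 S, s₁ < s → s < s₂ → that s₁ < that s₂}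

/-- Conditions (2.1)-(2.4) in the one-dimensional example, where `R = |·|` and
`D_zÎ(s,z) = z - 1 - ℓ̂(s)`; `t'`, `z'` denote the a.e. derivatives of `t̂`, `ẑ`. -/
structure Conds1d (T z₀ S : ℝ) (that zhat lhat t' z' : ℝ → ℝ) : Prop where
  deriv_t : ∀ᵐ s ∂(volume.restrict (Ioo 0 S)), HasDerivAt that (t' s) s
  deriv_z : ∀ᵐ s ∂(volume.restrict (Ioo 0 S)), HasDerivAt zhat (z' s) s
  t_init : that 0 = 0
  t_final : that S = T
  z_init : zhat 0 = z₀
  c22 : ∀ᵐ s ∂(volume.restrict (Ioo 0 S)),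
      0 ≤ t' s ∧ t' s * dist1 (-(zhat s - 1 - lhat s)) = 0
  c23 : ∀ᵐ s ∂(volume.restrict (Ioo 0 S)),
      t' s + |z' s| + |z' s| * dist1 (-(zhat s - 1 - lhat s)) = 1
  c24 : ∀ s₁ s₂ : ℝ, 0 ≤ s₁ → s₁ ≤ s₂ → s₂ ≤ S →
      En1 (zhat s₂) +
          (∫ r in s₁..s₂, (|z' r| + |z' r| * dist1 (-(zhat r - 1 - lhat r)))) =
        En1 (zhat s₁) + ∫ r in s₁..s₂, lhat r * z' r

/-- One-sided limits of the load, with the conventions at the endpoints. -/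
def OneSided1d (T : ℝ) (l lL lR : ℝ → ℝ) : Prop :=
  (∀ t ∈ Ioc (0 : ℝ) T, Tendsto l (nhdsWithin t (Iio t)) (nhds (lL t))) ∧ lL 0 = l 0 ∧
    (∀ t ∈ Ico (0 : ℝ) T, Tendsto l (nhdsWithin t (Ioi t)) (nhds (lR t))) ∧ lR T = l T

/-- The compatibility condition (2.5). -/
def Compat1d (T S : ℝ) (that lhat l lL lR : ℝ → ℝ) : Prop :=
  ∀ tstar ∈ Icc (0 : ℝ) T, ∃ sstar ∈ Icc (0 : ℝ) S, that sstar = tstar ∧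
    lhat sstar ∈ ({l tstar, lL tstar, lR tstar} : Set ℝ) ∧
    ∀ s ∈ Icc (0 : ℝ) S, that s = tstar →
      (s < sstar → lhat s = lL tstar) ∧ (sstar < s → lhat s = lR tstar)

/-- The limit parametrized time `t̂` (Section 4.2). -/
def that (s : ℝ) : ℝ := if s ≤ 1 then s else if s < 3 / 2 then 1 else s - 1 / 2

/-- The limit parametrized state `ẑ` (Section 4.2). -/
def zhat (s : ℝ) : ℝ := if s ≤ 1 then 0 else if s < 3 / 2 then s - 1 else 1 / 2

/-- The limit parametrized load `ℓ̂` of (4.34). -/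
def lhat (s : ℝ) : ℝ := if s ≤ 1 then 0 else if s < 3 / 2 then s - 1 else 0

/-- The a.e. derivative of `t̂`. -/
def t'lim (s : ℝ) : ℝ := if s ≤ 1 then 1 else if s < 3 / 2 then 0 else 1

/-- The a.e. derivative of `ẑ`. -/
def z'lim (s : ℝ) : ℝ := if s ≤ 1 then 0 else if s < 3 / 2 then 1 else 0

/-! ### Auxiliary lemmas -/

lemma dist1_zero (s : ℝ) : dist1 (-(zhat s - 1 - lhat s)) = 0 := by
  unfold dist1 zhat lhat
  split_ifs <;> ring_nf <;> norm_num [abs_of_nonneg]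

lemma z'lim_eq : z'lim = (Ioo (1:ℝ) (3/2)).indicator (fun _ => (1:ℝ)) := by
  funext r
  unfold z'lim
  rw [Set.indicator_apply]
  by_cases h1 : r ≤ 1
  · rw [if_pos h1, if_neg (fun hm : r ∈ Ioo (1:ℝ) (3/2) => absurd hm.1 (not_lt.2 h1))]
  · by_cases h2 : r < 3/2
    · rw [if_neg h1, if_pos h2, if_pos (show r ∈ Ioo (1:ℝ) (3/2) from ⟨not_le.1 h1, h2⟩)]
    · rw [if_neg h1, if_neg h2, if_neg (fun hm : r ∈ Ioo (1:ℝ) (3/2) => h2 hm.2)]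

lemma I1_eq (r : ℝ) :
    |z'lim r| + |z'lim r| * dist1 (-(zhat r - 1 - lhat r)) =
      (Ioo (1:ℝ) (3/2)).indicator (fun _ => (1:ℝ)) r := by
  rw [dist1_zero, mul_zero, add_zero, z'lim_eq]
  rw [Set.indicator_apply]
  split_ifs <;> simp

lemma I2_eq (r : ℝ) :
    lhat r * z'lim r = (Ioo (1:ℝ) (3/2)).indicator (fun x => x - 1) r := by
  unfold lhat z'lim
  rw [Set.indicator_apply]
  by_cases h1 : r ≤ 1
  · rw [if_pos h1, if_pos h1, if_neg (fun hm : r ∈ Ioo (1:ℝ) (3/2) => absurd hm.1 (not_lt.2 h1))]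
    ring
  · by_cases h2 : r < 3/2
    · rw [if_neg h1, if_neg h1, if_pos h2, if_pos h2,
        if_pos (show r ∈ Ioo (1:ℝ) (3/2) from ⟨not_le.1 h1, h2⟩)]
      ring
    · rw [if_neg h1, if_neg h1, if_neg h2, if_neg h2,
        if_neg (fun hm : r ∈ Ioo (1:ℝ) (3/2) => h2 hm.2)]
      ring

/-- The combined integrand `g = I1 - I2`. -/
def gInd : ℝ → ℝ := (Ioo (1:ℝ) (3/2)).indicator (fun x => 2 - x)

lemma indicator_integrable (h : ℝ → ℝ) (hc : Continuous h) :
    Integrable ((Ioo (1:ℝ) (3/2)).indicator h) volume := by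
  rw [integrable_indicator_iff measurableSet_Ioo]
  exact (hc.integrableOn_Icc).mono_set Ioo_subset_Icc_self

lemma gInd_integrable : Integrable gInd volume :=
  indicator_integrable _ (continuous_const.sub continuous_id)

lemma integral_two_sub (a b : ℝ) :
    ∫ r in a..b, (2 - r) = (2*b - b^2/2) - (2*a - a^2/2) := by
  have : ∀ x : ℝ, HasDerivAt (fun y : ℝ => 2*y - y^2/2) (2 - x) x := by
    intro x
    have h1 : HasDerivAt (fun y : ℝ => 2*y) 2 x := by
      simpa using (hasDerivAt_id x).const_mul (2:ℝ)
    have h2 : HasDerivAt (fun y : ℝ => y^2/2) x x := by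
      simpa using (hasDerivAt_pow 2 x).div_const 2
    exact h1.sub h2
  rw [intervalIntegral.integral_eq_sub_of_hasDerivAt (fun x _ => this x)
    ((continuous_const.sub continuous_id).intervalIntegrable a b)]

lemma gInd_eq_zero_left {r : ℝ} (h : r ≤ 1) : gInd r = 0 :=
  Set.indicator_of_notMem (fun hr => absurd hr.1 (not_lt.2 h)) _

lemma gInd_eq_zero_right {r : ℝ} (h : 3/2 ≤ r) : gInd r = 0 :=
  Set.indicator_of_notMem (fun hr => absurd hr.2 (not_lt.2 h)) _

lemma ae_ne_const (c : ℝ) : ∀ᵐ x : ℝ, x ≠ c := by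
  rw [ae_iff]
  simp only [ne_eq, not_not, setOf_eq_eq_singleton]
  exact measure_singleton c

lemma key_primitive {s : ℝ} (h0 : 0 ≤ s) (h52 : s ≤ 5/2) :
    ∫ r in (0:ℝ)..s, gInd r = - En1 (zhat s) := by
  have hint : ∀ a b : ℝ, IntervalIntegrable gInd volume a b :=
    fun a b => gInd_integrable.intervalIntegrable
  have hmid : ∀ t : ℝ, 1 ≤ t → t ≤ 3/2 → ∫ r in (1:ℝ)..t, gInd r = 2*t - t^2/2 - 3/2 := by
    intro t h1 h2
    have : ∫ r in (1:ℝ)..t, gInd r = ∫ r in (1:ℝ)..t, (2 - r) := by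
      apply intervalIntegral.integral_congr_ae
      have hne : ∀ᵐ x : ℝ, x ≠ 3/2 := ae_ne_const (3/2)
      filter_upwards [hne] with x hx hmem
      rw [uIoc_of_le h1] at hmem
      have hx32 : x < 3/2 := lt_of_le_of_ne (hmem.2.trans h2) hx
      unfold gInd
      exact Set.indicator_of_mem (Set.mem_Ioo.2 ⟨hmem.1, hx32⟩) _
    rw [this, integral_two_sub]; ring
  have hzero_left : ∀ a b : ℝ, 0 ≤ a → a ≤ b → b ≤ 1 → ∫ r in a..b, gInd r = 0 := by
    intro a b ha hab hb1
    rw [intervalIntegral.integral_congr (g := fun _ => (0:ℝ))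
      (fun x hx => by
        rw [uIcc_of_le hab] at hx
        exact gInd_eq_zero_left (hx.2.trans hb1))]
    simp
  have hzero_right : ∀ a b : ℝ, 3/2 ≤ a → a ≤ b → ∫ r in a..b, gInd r = 0 := by
    intro a b ha hab
    rw [intervalIntegral.integral_congr (g := fun _ => (0:ℝ))
      (fun x hx => by
        rw [uIcc_of_le hab] at hx
        exact gInd_eq_zero_right (ha.trans hx.1))]
    simp
  rcases le_or_gt s 1 with h|h
  · rw [hzero_left 0 s le_rfl h0 h]
    unfold En1 zhat
    rw [if_pos h]; norm_num
  · rcases le_or_gt s (3/2) with h2|h2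
    · have hz : zhat s = s - 1 := by
        unfold zhat
        rw [if_neg (not_le.2 h)]
        split_ifs with h3
        · rfl
        · have : s = 3/2 := le_antisymm h2 (not_lt.1 h3)
          rw [this]; norm_num
      rw [← intervalIntegral.integral_add_adjacent_intervals (b := (1:ℝ)) (hint 0 1) (hint 1 s),
        hzero_left 0 1 le_rfl zero_le_one le_rfl, hmid s h.le h2, hz]
      unfold En1; ring
    · have hz : zhat s = 1/2 := by
        unfold zhat
        rw [if_neg (not_le.2 h), if_neg (not_lt.2 h2.le)]
      rw [← intervalIntegral.integral_add_adjacent_intervals (b := (3/2:ℝ)) (hint 0 (3/2))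
          (hint (3/2) s),
        ← intervalIntegral.integral_add_adjacent_intervals (b := (1:ℝ)) (hint 0 1) (hint 1 (3/2)),
        hzero_left 0 1 le_rfl zero_le_one le_rfl, hmid (3/2) (by norm_num) le_rfl,
        hzero_right (3/2) s le_rfl h2.le, hz]
      unfold En1; norm_num

lemma that_sub {x y : ℝ} (h : x ≤ y) : 0 ≤ that y - that x ∧ that y - that x ≤ y - x := by
  unfold that
  split_ifs <;> (try simp only [not_le, not_lt] at *) <;> constructor <;> linarith

lemma zhat_sub {x y : ℝ} (h : x ≤ y) : 0 ≤ zhat y - zhat x ∧ zhat y - zhat x ≤ y - x := by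
  unfold zhat
  split_ifs <;> (try simp only [not_le, not_lt] at *) <;> constructor <;> linarith

lemma lip_of_sub {f : ℝ → ℝ}
    (hf : ∀ {x y : ℝ}, x ≤ y → 0 ≤ f y - f x ∧ f y - f x ≤ y - x) :
    LipschitzOnWith 1 f (Icc 0 (5/2)) := by
  apply LipschitzOnWith.of_dist_le_mul
  intro x _ y _
  rw [NNReal.coe_one, one_mul, Real.dist_eq, Real.dist_eq]
  rcases le_total x y with h|h
  · obtain ⟨h1, h2⟩ := hf h
    have e1 : |f x - f y| = f y - f x := by rw [abs_sub_comm]; exact abs_of_nonneg h1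
    have e2 : |x - y| = y - x := by rw [abs_sub_comm]; exact abs_of_nonneg (by linarith)
    rw [e1, e2]; exact h2
  · obtain ⟨h1, h2⟩ := hf h
    rw [abs_of_nonneg h1, abs_of_nonneg (by linarith : (0:ℝ) ≤ x - y)]
    exact h2

lemma evar_sub_le (f g : ℝ → ℝ) (s : Set ℝ) :
    eVariationOn (f - g) s ≤ eVariationOn f s + eVariationOn g s := by
  apply iSup_le
  rintro ⟨n, u, hu, us⟩
  calc ∑ i ∈ Finset.range n, edist ((f - g) (u (i+1))) ((f - g) (u i))
      ≤ ∑ i ∈ Finset.range n,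
          (edist (f (u (i+1))) (f (u i)) + edist (g (u (i+1))) (g (u i))) := by
        refine Finset.sum_le_sum fun i _ => ?_
        simp only [Pi.sub_apply, sub_eq_add_neg]
        calc edist (f (u (i+1)) + -(g (u (i+1)))) (f (u i) + -(g (u i)))
            ≤ edist (f (u (i+1))) (f (u i)) + edist (-(g (u (i+1)))) (-(g (u i))) :=
              edist_add_add_le _ _ _ _
          _ = edist (f (u (i+1))) (f (u i)) + edist (g (u (i+1))) (g (u i)) := by
              rw [edist_neg_neg]
    _ = (∑ i ∈ Finset.range n, edist (f (u (i+1))) (f (u i))) +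
          ∑ i ∈ Finset.range n, edist (g (u (i+1))) (g (u i)) := Finset.sum_add_distrib
    _ ≤ eVariationOn f s + eVariationOn g s :=
        add_le_add (eVariationOn.sum_le (f := f) (n := n) hu us) (eVariationOn.sum_le (f := g) (n := n) hu us)

lemma lhat_bv : BoundedVariationOn lhat (Icc 0 (5/2)) := by
  set p : ℝ → ℝ := fun s => if s ≤ 1 then 0 else if s < 3/2 then s - 1 else 1/2 with hp
  set q : ℝ → ℝ := fun s => if s < 3/2 then 0 else 1/2 with hq
  have hpq : lhat = p - q := by
    funext s
    simp only [Pi.sub_apply, hp, hq]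
    unfold lhat
    split_ifs <;> (try simp only [not_le, not_lt] at *) <;> first | linarith | ring1 | norm_num
  have hpm : MonotoneOn p (Icc (0:ℝ) (5/2)) := by
    intro a _ b _ hab
    simp only [hp]
    split_ifs <;> (try simp only [not_le, not_lt] at *) <;> first | linarith | norm_num
  have hqm : MonotoneOn q (Icc (0:ℝ) (5/2)) := by
    intro a _ b _ hab
    simp only [hq]
    split_ifs <;> (try simp only [not_le, not_lt] at *) <;> first | linarith | norm_num
  have hbv : ∀ f : ℝ → ℝ, MonotoneOn f (Icc (0:ℝ) (5/2)) →
      eVariationOn f (Icc (0:ℝ) (5/2)) ≠ ⊤ := by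
    intro f hf
    have := hf.eVariationOn_le (a := 0) (b := 5/2)
      (Set.left_mem_Icc.2 (by norm_num)) (Set.right_mem_Icc.2 (by norm_num))
    rw [Set.inter_self] at this
    exact (this.trans_lt ENNReal.ofReal_lt_top).ne
  rw [BoundedVariationOn, hpq]
  exact ((evar_sub_le p q _).trans_lt
    (ENNReal.add_lt_top.2 ⟨(hbv p hpm).lt_top, (hbv q hqm).lt_top⟩)).ne

lemma that_deriv {s : ℝ} (h1 : s ≠ 1) (h2 : s ≠ 3/2) : HasDerivAt that (t'lim s) s := by
  rcases lt_trichotomy s 1 with h|h|h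
  · have heq : that =ᶠ[𝓝 s] id := by
      filter_upwards [Iio_mem_nhds h] with x hx
      unfold that; rw [if_pos (le_of_lt hx)]; rfl
    have : HasDerivAt that 1 s := (hasDerivAt_id s).congr_of_eventuallyEq heq
    simpa [t'lim, h.le] using this
  · exact absurd h h1
  · rcases lt_trichotomy s (3/2) with h3|h3|h3
    · have heq : that =ᶠ[𝓝 s] (fun _ => (1:ℝ)) := by
        filter_upwards [Ioo_mem_nhds h h3] with x hx
        unfold that; rw [if_neg (not_le.2 hx.1), if_pos hx.2]
      have : HasDerivAt that 0 s := (hasDerivAt_const s (1:ℝ)).congr_of_eventuallyEq heq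
      simpa [t'lim, not_le.2 h, h3] using this
    · exact absurd h3 h2
    · have heq : that =ᶠ[𝓝 s] (fun x => x - 1/2) := by
        filter_upwards [Ioi_mem_nhds h3] with x hx
        have hx1 : (1:ℝ) < x := lt_trans (by norm_num) hx
        unfold that; rw [if_neg (not_le.2 hx1), if_neg (not_lt.2 (le_of_lt hx))]
      have : HasDerivAt that 1 s := ((hasDerivAt_id s).sub_const (1/2)).congr_of_eventuallyEq heq
      simpa [t'lim, not_le.2 h, not_lt.2 h3.le] using this

lemma zhat_deriv {s : ℝ} (h1 : s ≠ 1) (h2 : s ≠ 3/2) : HasDerivAt zhat (z'lim s) s := by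
  rcases lt_trichotomy s 1 with h|h|h
  · have heq : zhat =ᶠ[𝓝 s] (fun _ => (0:ℝ)) := by
      filter_upwards [Iio_mem_nhds h] with x hx
      unfold zhat; rw [if_pos (le_of_lt hx)]
    have : HasDerivAt zhat 0 s := (hasDerivAt_const s (0:ℝ)).congr_of_eventuallyEq heq
    simpa [z'lim, h.le] using this
  · exact absurd h h1
  · rcases lt_trichotomy s (3/2) with h3|h3|h3
    · have heq : zhat =ᶠ[𝓝 s] (fun x => x - 1) := by
        filter_upwards [Ioo_mem_nhds h h3] with x hx
        unfold zhat; rw [if_neg (not_le.2 hx.1), if_pos hx.2]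
      have : HasDerivAt zhat 1 s := ((hasDerivAt_id s).sub_const 1).congr_of_eventuallyEq heq
      simpa [z'lim, not_le.2 h, h3] using this
    · exact absurd h3 h2
    · have heq : zhat =ᶠ[𝓝 s] (fun _ => (1/2:ℝ)) := by
        filter_upwards [Ioi_mem_nhds h3] with x hx
        have hx1 : (1:ℝ) < x := lt_trans (by norm_num) hx
        unfold zhat; rw [if_neg (not_le.2 hx1), if_neg (not_lt.2 (le_of_lt hx))]
      have : HasDerivAt zhat 0 s := (hasDerivAt_const s (1/2:ℝ)).congr_of_eventuallyEq heq
      simpa [z'lim, not_le.2 h, not_lt.2 h3.le] using this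

lemma ae_ne_two : ∀ᵐ s ∂(volume.restrict (Ioo (0:ℝ) (5/2))), s ≠ 1 ∧ s ≠ 3/2 := by
  apply ae_restrict_of_ae
  have h1 : ∀ᵐ s : ℝ, s ≠ 1 := by
    rw [ae_iff]; simpa using measure_singleton (1:ℝ)
  have h2 : ∀ᵐ s : ℝ, s ≠ 3/2 := by
    rw [ae_iff]; simpa using measure_singleton (3/2:ℝ)
  filter_upwards [h1, h2] with s hs1 hs2
  exact ⟨hs1, hs2⟩

/-- **Section 4.2.** `(5/2, t̂, ẑ, ℓ̂)` is a relaxed solution associated with the zero load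
`ℓ ≡ 0`: it satisfies (2.1)-(2.4) and `ℓ̂(s) = ℓ(t̂(s)) = 0` a.e. on the set `M` where `t̂`
is strictly increasing, although `ẑ` is not constantly equal to the (locally stable)
initial state `z₀ = 0`. -/
theorem second_counterexample_relaxed_limit :
    (∃ L : ℝ≥0, LipschitzOnWith L that (Icc 0 (5 / 2))) ∧
    (∃ L : ℝ≥0, LipschitzOnWith L zhat (Icc 0 (5 / 2))) ∧
    BoundedVariationOn lhat (Icc 0 (5 / 2)) ∧
    Conds1d 2 0 (5 / 2) that zhat lhat t'lim z'lim ∧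
    (∀ᵐ s ∂(volume.restrict (Mset (5 / 2) that)), lhat s = (0 : ℝ)) ∧
    ¬ (∀ s ∈ Icc (0 : ℝ) (5 / 2), zhat s = 0) := by
  refine ⟨⟨1, lip_of_sub @that_sub⟩, ⟨1, lip_of_sub @zhat_sub⟩, lhat_bv, ?_, ?_, ?_⟩
  · constructor
    · filter_upwards [ae_ne_two] with s hs
      exact that_deriv hs.1 hs.2
    · filter_upwards [ae_ne_two] with s hs
      exact zhat_deriv hs.1 hs.2
    · unfold that; norm_num
    · unfold that; norm_num
    · unfold zhat; norm_num
    · apply Eventually.of_forall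
      intro s
      rw [dist1_zero, mul_zero]
      refine ⟨?_, rfl⟩
      unfold t'lim; split_ifs <;> norm_num
    · apply Eventually.of_forall
      intro s
      rw [dist1_zero, mul_zero, add_zero]
      unfold t'lim z'lim; split_ifs <;> norm_num
    · intro s₁ s₂ h0 h12 h25
      simp only [I1_eq, I2_eq]
      have hint1 : IntervalIntegrable ((Ioo (1:ℝ) (3/2)).indicator (fun _ => (1:ℝ)))
          volume s₁ s₂ := (indicator_integrable _ continuous_const).intervalIntegrable
      have hint2 : IntervalIntegrable ((Ioo (1:ℝ) (3/2)).indicator (fun x => x - 1))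
          volume s₁ s₂ :=
        (indicator_integrable _ (continuous_id.sub continuous_const)).intervalIntegrable
      have hdiff : (∫ r in s₁..s₂, (Ioo (1:ℝ) (3/2)).indicator (fun _ => (1:ℝ)) r) -
          (∫ r in s₁..s₂, (Ioo (1:ℝ) (3/2)).indicator (fun x => x - 1) r) =
          ∫ r in s₁..s₂, gInd r := by
        rw [← intervalIntegral.integral_sub hint1 hint2]
        apply intervalIntegral.integral_congr
        intro r _
        by_cases hr : r ∈ Ioo (1:ℝ) (3/2)
        · simp only [gInd, Set.indicator_of_mem hr]; ring
        · simp only [gInd, Set.indicator_of_notMem hr]; ring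
      have hadd : (∫ r in (0:ℝ)..s₁, gInd r) + ∫ r in s₁..s₂, gInd r =
          ∫ r in (0:ℝ)..s₂, gInd r :=
        intervalIntegral.integral_add_adjacent_intervals
          gInd_integrable.intervalIntegrable gInd_integrable.intervalIntegrable
      have k1 := key_primitive h0 (h12.trans h25)
      have k2 := key_primitive (h0.trans h12) h25
      linarith
  · have hsub : Mset (5/2) that ⊆ (Ioo (1:ℝ) (3/2))ᶜ := by
      intro s hs hmem
      obtain ⟨hIoo, hstrict⟩ := hs
      have h1 : (1:ℝ) < s := hmem.1
      have h2 : s < 3/2 := hmem.2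
      have key := hstrict ((1+s)/2) ⟨by linarith, by linarith⟩ ((s+3/2)/2)
        ⟨by linarith, by linarith⟩ (by linarith) (by linarith)
      have e1 : that ((1+s)/2) = 1 := by
        unfold that; rw [if_neg (by push_neg; linarith), if_pos (by linarith)]
      have e2 : that ((s+3/2)/2) = 1 := by
        unfold that; rw [if_neg (by push_neg; linarith), if_pos (by linarith)]
      rw [e1, e2] at key
      exact lt_irrefl _ key
    have hzero : ∀ᵐ s ∂(volume.restrict ((Ioo (1:ℝ) (3/2))ᶜ)), lhat s = 0 := by
      apply ae_restrict_of_forall_mem measurableSet_Ioo.compl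
      intro s hs
      unfold lhat
      split_ifs with h1 h2
      · rfl
      · exact absurd ⟨not_le.1 h1, h2⟩ hs
      · rfl
    exact hzero.filter_mono (ae_mono (Measure.restrict_mono hsub le_rfl))
  · intro h
    have := h (3/2) ⟨by norm_num, by norm_num⟩
    unfold zhat at this
    norm_num at this

end
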